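/- Let m(x) = f̄ + ḡᵀ(x - x⁰) be a linear model on B(x⁰, δ) where |f̄ - f(x⁰)| ≤ κ_ef·δ²/2 and ‖ḡ - ∇f(x⁰)‖ ≤ κ_eg·δ/2, and suppose ∇f is L-Lipschitz. Then there exist constants κ'_ef, κ'_eg depending only on κ_ef, κ_eg, L such that m is (κ'_ef, κ'_eg)-fully linear of f on B(x⁰, δ): specifically, for all y ∈ B(x⁰, δ), ‖∇f(y) - ∇m(y)‖ ≤ (κ_eg/2 + L)δ and |f(y) - m(y)| ≤ (κ_ef/2 + κ_eg/2 + 3L/2)δ². -/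

import Mathlib

open Metric

theorem stmt15 {n : ℕ} (f : EuclideanSpace ℝ (Fin n) → ℝ)
    (g : EuclideanSpace ℝ (Fin n) → EuclideanSpace ℝ (Fin n))
    (x0 gbar : EuclideanSpace ℝ (Fin n)) (fbar δ κef κeg : ℝ) (L : NNReal)
    (hδ : 0 < δ)
    (m : EuclideanSpace ℝ (Fin n) → ℝ)
    (hm : ∀ y, m y = fbar + (inner ℝ gbar (y - x0) : ℝ))
    (hf : ∀ y ∈ closedBall x0 δ, HasGradientAt f (g y) y)
    (hL : LipschitzOnWith L g (closedBall x0 δ))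
    (hfbar : |fbar - f x0| ≤ κef * δ ^ 2 / 2)
    (hgbar : ‖gbar - g x0‖ ≤ κeg * δ / 2) :
    ∀ y ∈ closedBall x0 δ,
      ‖g y - gbar‖ ≤ (κeg / 2 + L) * δ ∧
        |f y - m y| ≤ (κef / 2 + κeg / 2 + 3 * L / 2) * δ ^ 2 := by
  intro y hy
  have hx0 : x0 ∈ closedBall x0 δ := mem_closedBall_self hδ.le
  have hyd : ‖y - x0‖ ≤ δ := by
    rw [← dist_eq_norm]; exact mem_closedBall.mp hy
  have hLip : ∀ z ∈ closedBall x0 δ, ‖g z - g x0‖ ≤ (L : ℝ) * δ := by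
    intro z hz
    have h1 : dist (g z) (g x0) ≤ (L : ℝ) * dist z x0 := hL.dist_le_mul z hz x0 hx0
    rw [dist_eq_norm] at h1
    refine h1.trans ?_
    have hzd : dist z x0 ≤ δ := mem_closedBall.mp hz
    have := L.coe_nonneg
    nlinarith
  set φ : EuclideanSpace ℝ (Fin n) →L[ℝ] ℝ :=
    InnerProductSpace.toDual ℝ (EuclideanSpace ℝ (Fin n)) (g x0) with hφ
  have htaylor : ‖f y - f x0 - φ (y - x0)‖ ≤ ((L : ℝ) * δ) * ‖y - x0‖ := by
    apply Convex.norm_image_sub_le_of_norm_hasFDerivWithin_le'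
      (f' := fun z => InnerProductSpace.toDual ℝ (EuclideanSpace ℝ (Fin n)) (g z))
      (fun z hz => ((hf z hz).hasFDerivAt).hasFDerivWithinAt)
      ?_ (convex_closedBall x0 δ) hx0 hy
    intro z hz
    have : ‖(InnerProductSpace.toDual ℝ (EuclideanSpace ℝ (Fin n))) (g z) - φ‖
        = ‖g z - g x0‖ := by
      rw [hφ, ← map_sub]
      exact (InnerProductSpace.toDual ℝ (EuclideanSpace ℝ (Fin n))).norm_map _
    rw [this]
    exact hLip z hz
  have hφapp : φ (y - x0) = (inner ℝ (g x0) (y - x0) : ℝ) := by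
    simp [hφ, InnerProductSpace.toDual_apply_apply]
  have hinner : |(inner ℝ (g x0 - gbar) (y - x0) : ℝ)| ≤ (κeg * δ / 2) * δ := by
    have hcs : |(inner ℝ (g x0 - gbar) (y - x0) : ℝ)| ≤ ‖g x0 - gbar‖ * ‖y - x0‖ :=
      abs_real_inner_le_norm _ _
    refine hcs.trans ?_
    have h1 : ‖g x0 - gbar‖ ≤ κeg * δ / 2 := by rw [norm_sub_rev]; exact hgbar
    nlinarith [norm_nonneg (g x0 - gbar), norm_nonneg (y - x0)]
  constructor
  · calc ‖g y - gbar‖ = ‖(g y - g x0) + (g x0 - gbar)‖ := by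
          rw [sub_add_sub_cancel]
      _ ≤ ‖g y - g x0‖ + ‖g x0 - gbar‖ := norm_add_le _ _
      _ ≤ (L : ℝ) * δ + κeg * δ / 2 := by
          refine add_le_add (hLip y hy) ?_
          rw [norm_sub_rev]; exact hgbar
      _ = (κeg / 2 + L) * δ := by ring
  · have hdecomp : f y - m y =
        (f y - f x0 - (inner ℝ (g x0) (y - x0) : ℝ)) + (f x0 - fbar)
          + (inner ℝ (g x0 - gbar) (y - x0) : ℝ) := by
      rw [hm]
      have : (inner ℝ (g x0 - gbar) (y - x0) : ℝ)
          = (inner ℝ (g x0) (y - x0) : ℝ) - (inner ℝ gbar (y - x0) : ℝ) := by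
        rw [inner_sub_left]
      rw [this]; ring
    rw [hdecomp]
    set A := f y - f x0 - (inner ℝ (g x0) (y - x0) : ℝ) with hA
    set B := f x0 - fbar with hB
    set C := (inner ℝ (g x0 - gbar) (y - x0) : ℝ) with hC
    have h1 : |A| ≤ (L : ℝ) * δ ^ 2 := by
      rw [hA, ← hφapp]
      have h := htaylor
      rw [Real.norm_eq_abs] at h
      refine h.trans ?_
      have hLδ : (0:ℝ) ≤ (L : ℝ) * δ := by positivity
      have := mul_le_mul_of_nonneg_left hyd hLδ
      nlinarith
    have h2 : |B| ≤ κef * δ ^ 2 / 2 := by rw [hB, abs_sub_comm]; exact hfbar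
    have h3 : |C| ≤ κeg / 2 * δ ^ 2 := hinner.trans (le_of_eq (by ring))
    have habs1 : |A + B + C| ≤ |A + B| + |C| := abs_add_le _ _
    have habs2 : |A + B| ≤ |A| + |B| := abs_add_le _ _
    have hLn : (0:ℝ) ≤ (L : ℝ) / 2 * δ ^ 2 := by positivity
    clear_value A B C
    clear hA hB hC hinner htaylor hφapp hdecomp
    linarith
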